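/- arXiv:1911.03714 — 3 statements merged into one kernel-verified Lean document; each statement's English description precedes it below -/
import Mathlib

section
/- Suppose the system ẋ = A(t)x is uniformly asymptotically stable and let x be any solution. Then for all t ≥ t₀: (λ_min[H(t₀)]/λ_max[H(t)])^{1/2} · ‖x(t₀)‖_I · exp(−(1/2)·∫_{t₀}^t dτ/λ_min[H(τ)]) ≤ ‖x(t)‖_I ≤ (λ_max[H(t₀)]/λ_min[H(t)])^{1/2} · ‖x(t₀)‖_I · exp(−(1/2)·∫_{t₀}^t dτ/λ_max[H(τ)]), where H(t) = ∫_t^∞ Φ(τ,t)ᵀ·Φ(τ,t) dτ. -/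
open scoped Matrix
open scoped Matrix.Norms.L2Operator  -- `‖·‖` on matrices is the operator norm induced by the Euclidean norm
open Set MeasureTheory

set_option maxHeartbeats 800000


/-- The Euclidean norm on `ℝⁿ` (denoted `‖·‖_I` in the paper). -/
noncomputable def euclNorm {n : ℕ} (x : Fin n → ℝ) : ℝ :=
  Real.sqrt (x ⬝ᵥ x)

/-- The largest (real) eigenvalue of a matrix, as the supremum of its real spectrum.
For a real symmetric matrix this is `λ_max`. -/
noncomputable def lambdaMax {n : ℕ} (M : Matrix (Fin n) (Fin n) ℝ) : ℝ :=
  sSup (spectrum ℝ M)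

/-- The smallest (real) eigenvalue of a matrix, as the infimum of its real spectrum.
For a real symmetric matrix this is `λ_min`. -/
noncomputable def lambdaMin {n : ℕ} (M : Matrix (Fin n) (Fin n) ℝ) : ℝ :=
  sInf (spectrum ℝ M)

/-- `H(t) = ∫_t^∞ Φ(τ,t)ᵀ Φ(τ,t) dτ`. -/
noncomputable def Hmat {n : ℕ} (Φ : ℝ → ℝ → Matrix (Fin n) (Fin n) ℝ) (t : ℝ) :
    Matrix (Fin n) (Fin n) ℝ :=
  ∫ τ in Ioi t, (Φ τ t)ᵀ * Φ τ t

namespace Stmt11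

lemma dot_nonneg {n : ℕ} (y : Fin n → ℝ) : 0 ≤ y ⬝ᵥ y :=
  Finset.sum_nonneg fun i _ => mul_self_nonneg _

lemma euclNorm_eq {n : ℕ} (y : Fin n → ℝ) :
    euclNorm y = ‖(EuclideanSpace.equiv (Fin n) ℝ).symm y‖ := by
  rw [euclNorm, EuclideanSpace.norm_eq]
  congr 1
  simp [dotProduct, Real.norm_eq_abs, sq_abs, sq]

lemma sq_euclNorm {n : ℕ} (y : Fin n → ℝ) : euclNorm y ^ 2 = y ⬝ᵥ y := by
  rw [euclNorm, Real.sq_sqrt (dot_nonneg y)]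

lemma dot_mulVec_le {n : ℕ} (P : Matrix (Fin n) (Fin n) ℝ) (y : Fin n → ℝ) :
    y ⬝ᵥ (P *ᵥ y) ≤ ‖P‖ * (y ⬝ᵥ y) := by
  have h1 : y ⬝ᵥ (P *ᵥ y) ≤ euclNorm y * euclNorm (P *ᵥ y) := by
    have := abs_real_inner_le_norm ((EuclideanSpace.equiv (Fin n) ℝ).symm y)
      ((EuclideanSpace.equiv (Fin n) ℝ).symm (P *ᵥ y))
    rw [← euclNorm_eq, ← euclNorm_eq] at this
    refine le_trans (le_abs_self _) (le_trans (le_of_eq ?_) this)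
    rw [real_inner_comm]
    simp [EuclideanSpace.inner_eq_star_dotProduct, dotProduct, mul_comm]
  have h2 : euclNorm (P *ᵥ y) ≤ ‖P‖ * euclNorm y := by
    rw [euclNorm_eq, euclNorm_eq]
    exact P.l2_opNorm_mulVec _
  have h3 : (0:ℝ) ≤ euclNorm y := Real.sqrt_nonneg _
  calc y ⬝ᵥ (P *ᵥ y) ≤ euclNorm y * (‖P‖ * euclNorm y) := by nlinarith
    _ = ‖P‖ * (y ⬝ᵥ y) := by rw [← sq_euclNorm]; ring



variable {n : ℕ}

lemma star_eq_transpose (U : Matrix (Fin n) (Fin n) ℝ) : star U = Uᵀ := by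
  ext i j; simp [Matrix.star_apply]

lemma quad_repr {M : Matrix (Fin n) (Fin n) ℝ} (hM : M.IsHermitian) (y : Fin n → ℝ) :
    y ⬝ᵥ (M *ᵥ y) = ∑ i, hM.eigenvalues i *
      (((hM.eigenvectorUnitary : Matrix (Fin n) (Fin n) ℝ)ᵀ *ᵥ y) i *
       ((hM.eigenvectorUnitary : Matrix (Fin n) (Fin n) ℝ)ᵀ *ᵥ y) i) := by
  set U : Matrix (Fin n) (Fin n) ℝ := (hM.eigenvectorUnitary : Matrix (Fin n) (Fin n) ℝ) with hU
  have hst : star U = Uᵀ := star_eq_transpose U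
  conv_lhs => rw [hM.spectral_theorem, Unitary.conjStarAlgAut_apply]
  rw [hst]
  have hd : Matrix.diagonal (RCLike.ofReal ∘ hM.eigenvalues) = Matrix.diagonal hM.eigenvalues := by
    congr 1
  rw [hd, ← Matrix.mulVec_mulVec, ← Matrix.mulVec_mulVec, Matrix.dotProduct_mulVec,
    ← Matrix.mulVec_transpose]
  simp [dotProduct, Matrix.mulVec_diagonal, mul_assoc, mul_comm, mul_left_comm]
  rfl

lemma dot_w (U : Matrix (Fin n) (Fin n) ℝ) (hU : U ∈ Matrix.unitaryGroup (Fin n) ℝ)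
    (y : Fin n → ℝ) : (Uᵀ *ᵥ y) ⬝ᵥ (Uᵀ *ᵥ y) = y ⬝ᵥ y := by
  nth_rewrite 1 [Matrix.mulVec_transpose]
  rw [← Matrix.dotProduct_mulVec, Matrix.mulVec_mulVec]
  have h1 : U * Uᵀ = 1 := by
    rw [← star_eq_transpose]
    exact Matrix.UnitaryGroup.star_mul_self ⟨U, hU⟩ |>.symm ▸ (Unitary.mul_star_self_of_mem hU)
  rw [h1, Matrix.one_mulVec]



lemma exists_unit_quad_eq {n : ℕ} {M : Matrix (Fin n) (Fin n) ℝ} (hM : M.IsHermitian)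
    (j : Fin n) : ∃ y : Fin n → ℝ, y ⬝ᵥ y = 1 ∧ y ⬝ᵥ (M *ᵥ y) = hM.eigenvalues j := by
  classical
  set U : Matrix (Fin n) (Fin n) ℝ := (hM.eigenvectorUnitary : Matrix (Fin n) (Fin n) ℝ) with hUdef
  have hUmem : U ∈ Matrix.unitaryGroup (Fin n) ℝ := hM.eigenvectorUnitary.2
  have hUtU : Uᵀ * U = 1 := by
    have := hUmem.1
    rw [Matrix.star_eq_conjTranspose] at this
    rwa [← star_eq_transpose, Matrix.star_eq_conjTranspose]
  set y : Fin n → ℝ := U *ᵥ Pi.single j 1 with hy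
  have hw : Uᵀ *ᵥ y = Pi.single j 1 := by
    rw [hy, Matrix.mulVec_mulVec, hUtU, Matrix.one_mulVec]
  have hdot : y ⬝ᵥ y = 1 := by
    rw [← dot_w U hUmem y, hw]
    simp [dotProduct, Pi.single_apply]
  refine ⟨y, hdot, ?_⟩
  rw [quad_repr hM y, ← hUdef, hw]
  simp [Pi.single_apply, mul_ite]


lemma rayleigh {n : ℕ} (hn : 0 < n) {M : Matrix (Fin n) (Fin n) ℝ} (hM : M.IsHermitian)
    (y : Fin n → ℝ) :
    lambdaMin M * (y ⬝ᵥ y) ≤ y ⬝ᵥ (M *ᵥ y) ∧ y ⬝ᵥ (M *ᵥ y) ≤ lambdaMax M * (y ⬝ᵥ y) := by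
  classical
  haveI : Nonempty (Fin n) := ⟨⟨0, hn⟩⟩
  have hspec : spectrum ℝ M = Set.range hM.eigenvalues := by
    rw [hM.spectrum_eq_image_range, RCLike.ofReal_real_eq_id, Set.image_id]
  have hfin : (Set.range hM.eigenvalues).Finite := Set.finite_range _
  have hbdd : BddAbove (Set.range hM.eigenvalues) := hfin.bddAbove
  have hbdd' : BddBelow (Set.range hM.eigenvalues) := hfin.bddBelow
  have hmax : ∀ i, hM.eigenvalues i ≤ lambdaMax M := fun i => by
    rw [lambdaMax, hspec]; exact le_csSup hbdd ⟨i, rfl⟩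
  have hmin : ∀ i, lambdaMin M ≤ hM.eigenvalues i := fun i => by
    rw [lambdaMin, hspec]; exact csInf_le hbdd' ⟨i, rfl⟩
  rw [quad_repr hM y, ← dot_w (hM.eigenvectorUnitary : Matrix (Fin n) (Fin n) ℝ)
    hM.eigenvectorUnitary.2 y]
  set w : Fin n → ℝ := (hM.eigenvectorUnitary : Matrix (Fin n) (Fin n) ℝ)ᵀ *ᵥ y
  have hdot : w ⬝ᵥ w = ∑ i, w i * w i := rfl
  constructor
  · rw [hdot, Finset.mul_sum]
    exact Finset.sum_le_sum fun i _ => mul_le_mul_of_nonneg_right (hmin i) (mul_self_nonneg _)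
  · rw [hdot, Finset.mul_sum]
    exact Finset.sum_le_sum fun i _ => mul_le_mul_of_nonneg_right (hmax i) (mul_self_nonneg _)

lemma lambdaMax_attained {n : ℕ} (hn : 0 < n) {M : Matrix (Fin n) (Fin n) ℝ}
    (hM : M.IsHermitian) : ∃ y : Fin n → ℝ, y ⬝ᵥ y = 1 ∧ y ⬝ᵥ (M *ᵥ y) = lambdaMax M := by
  haveI : Nonempty (Fin n) := ⟨⟨0, hn⟩⟩
  have hspec : spectrum ℝ M = Set.range hM.eigenvalues := by
    rw [hM.spectrum_eq_image_range, RCLike.ofReal_real_eq_id, Set.image_id]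
  have hmem : lambdaMax M ∈ Set.range hM.eigenvalues := by
    rw [lambdaMax, hspec]
    exact (Set.range_nonempty _).csSup_mem (Set.finite_range _)
  obtain ⟨j, hj⟩ := hmem
  obtain ⟨y, h1, h2⟩ := exists_unit_quad_eq hM j
  exact ⟨y, h1, by rw [h2, hj]⟩

lemma lambdaMin_attained {n : ℕ} (hn : 0 < n) {M : Matrix (Fin n) (Fin n) ℝ}
    (hM : M.IsHermitian) : ∃ y : Fin n → ℝ, y ⬝ᵥ y = 1 ∧ y ⬝ᵥ (M *ᵥ y) = lambdaMin M := by
  haveI : Nonempty (Fin n) := ⟨⟨0, hn⟩⟩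
  have hspec : spectrum ℝ M = Set.range hM.eigenvalues := by
    rw [hM.spectrum_eq_image_range, RCLike.ofReal_real_eq_id, Set.image_id]
  have hmem : lambdaMin M ∈ Set.range hM.eigenvalues := by
    rw [lambdaMin, hspec]
    exact (Set.range_nonempty _).csInf_mem (Set.finite_range _)
  obtain ⟨j, hj⟩ := hmem
  obtain ⟨y, h1, h2⟩ := exists_unit_quad_eq hM j
  exact ⟨y, h1, by rw [h2, hj]⟩

lemma abs_lambdaMax_sub_le {n : ℕ} (hn : 0 < n) {M N : Matrix (Fin n) (Fin n) ℝ}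
    (hM : M.IsHermitian) (hN : N.IsHermitian) : |lambdaMax M - lambdaMax N| ≤ ‖M - N‖ := by
  have key : ∀ (P Q : Matrix (Fin n) (Fin n) ℝ) (hP : P.IsHermitian) (hQ : Q.IsHermitian),
      lambdaMax P ≤ lambdaMax Q + ‖P - Q‖ := by
    intro P Q hP hQ
    obtain ⟨y, hy1, hy2⟩ := lambdaMax_attained hn hP
    have h1 : y ⬝ᵥ (Q *ᵥ y) ≤ lambdaMax Q * (y ⬝ᵥ y) := (rayleigh hn hQ y).2
    have h2 : y ⬝ᵥ ((P - Q) *ᵥ y) ≤ ‖P - Q‖ * (y ⬝ᵥ y) := dot_mulVec_le _ y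
    have h3 : y ⬝ᵥ (P *ᵥ y) = y ⬝ᵥ (Q *ᵥ y) + y ⬝ᵥ ((P - Q) *ᵥ y) := by
      rw [Matrix.sub_mulVec, dotProduct_sub]; ring
    rw [← hy2, h3]
    rw [hy1] at h1 h2
    linarith
  have h1 := key M N hM hN
  have h2 := key N M hN hM
  rw [abs_sub_le_iff]
  constructor
  · linarith
  · rw [← norm_neg, neg_sub] at h2; linarith

lemma abs_lambdaMin_sub_le {n : ℕ} (hn : 0 < n) {M N : Matrix (Fin n) (Fin n) ℝ}
    (hM : M.IsHermitian) (hN : N.IsHermitian) : |lambdaMin M - lambdaMin N| ≤ ‖M - N‖ := by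
  have key : ∀ (P Q : Matrix (Fin n) (Fin n) ℝ) (hP : P.IsHermitian) (hQ : Q.IsHermitian),
      lambdaMin P ≤ lambdaMin Q + ‖P - Q‖ := by
    intro P Q hP hQ
    obtain ⟨y, hy1, hy2⟩ := lambdaMin_attained hn hQ
    have h1 : lambdaMin P * (y ⬝ᵥ y) ≤ y ⬝ᵥ (P *ᵥ y) := (rayleigh hn hP y).1
    have h2 : y ⬝ᵥ ((P - Q) *ᵥ y) ≤ ‖P - Q‖ * (y ⬝ᵥ y) := dot_mulVec_le _ y
    have h3 : y ⬝ᵥ (P *ᵥ y) = y ⬝ᵥ (Q *ᵥ y) + y ⬝ᵥ ((P - Q) *ᵥ y) := by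
      rw [Matrix.sub_mulVec, dotProduct_sub]; ring
    rw [hy1] at h1 h2
    rw [h3, hy2] at h1
    linarith
  have h1 := key M N hM hN
  have h2 := key N M hN hM
  rw [abs_sub_le_iff]
  constructor
  · linarith
  · rw [← norm_neg, neg_sub] at h2; linarith

/-- Matrices to continuous linear maps on `Fin n → ℝ`. -/
noncomputable def matCLM {n : ℕ} : Matrix (Fin n) (Fin n) ℝ ≃ₗ[ℝ] ((Fin n → ℝ) →L[ℝ] (Fin n → ℝ)) :=
  Matrix.toLin'.trans LinearMap.toContinuousLinearMap

lemma matCLM_apply {n : ℕ} (M : Matrix (Fin n) (Fin n) ℝ) (y : Fin n → ℝ) :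
    matCLM M y = M *ᵥ y := rfl

lemma continuous_matCLM {n : ℕ} : Continuous (matCLM (n := n)) :=
  LinearMap.continuous_of_finiteDimensional (matCLM (n := n)).toLinearMap

/-- Uniqueness of solutions of the linear ODE, forward and backward in time. -/
lemma uniq {n : ℕ} (t₀ : ℝ) (A : ℝ → Matrix (Fin n) (Fin n) ℝ)
    (hA : ContinuousOn A (Ici t₀)) (f g : ℝ → Fin n → ℝ)
    (hf : ∀ t ∈ Ici t₀, HasDerivWithinAt f (A t *ᵥ f t) (Ici t₀) t)
    (hg : ∀ t ∈ Ici t₀, HasDerivWithinAt g (A t *ᵥ g t) (Ici t₀) t)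
    {s : ℝ} (hs : s ∈ Ici t₀) (heq : f s = g s) : ∀ t ∈ Ici t₀, f t = g t := by
  intro t ht
  set b : ℝ := max s t with hb
  have hsb : s ≤ b := le_max_left _ _
  have htb : t ≤ b := le_max_right _ _
  have ht₀b : t₀ ≤ b := le_trans ht htb
  -- a Lipschitz bound on `Icc t₀ b`
  obtain ⟨C, hC⟩ : ∃ C, ∀ τ ∈ Icc t₀ b, ‖matCLM (A τ)‖ ≤ C := by
    have hcont : ContinuousOn (fun τ => matCLM (A τ)) (Icc t₀ b) :=
      (continuous_matCLM.comp_continuousOn (hA.mono Icc_subset_Ici_self))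
    exact isCompact_Icc.exists_bound_of_continuousOn hcont
  set K : NNReal := ⟨max C 0, le_max_right _ _⟩ with hK
  set v : ℝ → (Fin n → ℝ) → (Fin n → ℝ) :=
    fun τ y => if τ ∈ Icc t₀ b then A τ *ᵥ y else 0 with hv
  have hlip : ∀ τ, LipschitzOnWith K (v τ) univ := by
    intro τ
    by_cases hτ : τ ∈ Icc t₀ b
    · have h1 : LipschitzWith ‖matCLM (A τ)‖₊ (matCLM (A τ)) := (matCLM (A τ)).lipschitz
      have h2 : LipschitzWith K (fun y => A τ *ᵥ y) := by
        have heqf : (fun y => A τ *ᵥ y) = ⇑(matCLM (A τ)) := by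
          funext y; rw [matCLM_apply]
        rw [heqf]
        refine LipschitzWith.weaken h1 ?_
        rw [← NNReal.coe_le_coe]
        exact le_trans (hC τ hτ) (le_max_left _ _)
      have : v τ = fun y => A τ *ᵥ y := by funext y; rw [hv]; simp [hτ]
      rw [this]
      exact h2.lipschitzOnWith
    · have : v τ = fun _ => 0 := by funext y; rw [hv]; simp [hτ]
      rw [this]
      exact ((LipschitzWith.const (0 : Fin n → ℝ)).weaken (zero_le : 0 ≤ K)).lipschitzOnWith
  have hfc : ContinuousOn f (Ici t₀) := fun τ hτ => (hf τ hτ).continuousWithinAt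
  have hgc : ContinuousOn g (Ici t₀) := fun τ hτ => (hg τ hτ).continuousWithinAt
  -- equality on `Icc s b`
  have hright : EqOn f g (Icc s b) := by
    refine ODE_solution_unique_of_mem_Icc_right (fun τ _ => hlip τ)
      (hfc.mono (Icc_subset_Ici_self.trans (Ici_subset_Ici.mpr hs))) ?_
      (fun τ _ => mem_univ _)
      (hgc.mono (Icc_subset_Ici_self.trans (Ici_subset_Ici.mpr hs))) ?_
      (fun τ _ => mem_univ _) heq
    · intro τ hτ
      have hτ' : τ ∈ Ici t₀ := le_trans hs hτ.1
      have : v τ (f τ) = A τ *ᵥ f τ := by rw [hv]; simp [hτ'.out, hτ.2.le, Icc, hτ']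
      rw [this]
      exact (hf τ hτ').mono (Ici_subset_Ici.mpr hτ')
    · intro τ hτ
      have hτ' : τ ∈ Ici t₀ := le_trans hs hτ.1
      have : v τ (g τ) = A τ *ᵥ g τ := by rw [hv]; simp [hτ'.out, hτ.2.le, Icc, hτ']
      rw [this]
      exact (hg τ hτ').mono (Ici_subset_Ici.mpr hτ')
  -- equality on `Icc t₀ s`
  have hleft : EqOn f g (Icc t₀ s) := by
    refine ODE_solution_unique_of_mem_Icc_left (fun τ _ => hlip τ)
      (hfc.mono Icc_subset_Ici_self) ?_ (fun τ _ => mem_univ _)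
      (hgc.mono Icc_subset_Ici_self) ?_ (fun τ _ => mem_univ _) heq
    · intro τ hτ
      have hτ' : τ ∈ Ici t₀ := hτ.1.le
      have hv' : v τ (f τ) = A τ *ᵥ f τ := by
        rw [hv]; simp [Icc, hτ'.out, le_trans hτ.2 hsb]
      rw [hv']
      exact ((hf τ hτ').hasDerivAt (Ici_mem_nhds hτ.1)).hasDerivWithinAt
    · intro τ hτ
      have hτ' : τ ∈ Ici t₀ := hτ.1.le
      have hv' : v τ (g τ) = A τ *ᵥ g τ := by
        rw [hv]; simp [Icc, hτ'.out, le_trans hτ.2 hsb]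
      rw [hv']
      exact ((hg τ hτ').hasDerivAt (Ici_mem_nhds hτ.1)).hasDerivWithinAt
  rcases le_total s t with h | h
  · exact hright ⟨h, htb⟩
  · exact hleft ⟨ht, h⟩

noncomputable def colCLM {n : ℕ} (c : Fin n → ℝ) :
    Matrix (Fin n) (Fin n) ℝ →L[ℝ] (Fin n → ℝ) :=
  LinearMap.toContinuousLinearMap
    { toFun := fun M => M *ᵥ c
      map_add' := fun M N => Matrix.add_mulVec M N c
      map_smul' := fun a M => Matrix.smul_mulVec a M c }

lemma colCLM_apply {n : ℕ} (c : Fin n → ℝ) (M : Matrix (Fin n) (Fin n) ℝ) :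
    colCLM c M = M *ᵥ c := rfl

lemma hasDerivWithinAt_mulVec_const {n : ℕ} {F : ℝ → Matrix (Fin n) (Fin n) ℝ}
    {F' : Matrix (Fin n) (Fin n) ℝ} {s : Set ℝ} {t : ℝ} (c : Fin n → ℝ)
    (h : HasDerivWithinAt F F' s t) :
    HasDerivWithinAt (fun τ => F τ *ᵥ c) (F' *ᵥ c) s t := by
  have := (colCLM c).hasFDerivAt (x := F t) |>.comp_hasDerivWithinAt t h
  exact this

section Phi

variable {n : ℕ} {t₀ : ℝ} {A : ℝ → Matrix (Fin n) (Fin n) ℝ}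
  {Φ : ℝ → ℝ → Matrix (Fin n) (Fin n) ℝ}

/-- `τ ↦ Φ τ s *ᵥ c` is a solution. -/
lemma phi_col_sol (hΦ_deriv : ∀ τ ∈ Ici t₀, ∀ t ∈ Ici t₀,
      HasDerivWithinAt (fun s => Φ s τ) (A t * Φ t τ) (Ici t₀) t)
    {s : ℝ} (hs : s ∈ Ici t₀) (c : Fin n → ℝ) :
    ∀ t ∈ Ici t₀, HasDerivWithinAt (fun τ => Φ τ s *ᵥ c)
      (A t *ᵥ (Φ t s *ᵥ c)) (Ici t₀) t := by
  intro t ht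
  have := hasDerivWithinAt_mulVec_const c (hΦ_deriv s hs t ht)
  rwa [← Matrix.mulVec_mulVec] at this

lemma contOn_phi (hΦ_deriv : ∀ τ ∈ Ici t₀, ∀ t ∈ Ici t₀,
      HasDerivWithinAt (fun s => Φ s τ) (A t * Φ t τ) (Ici t₀) t)
    {s : ℝ} (hs : s ∈ Ici t₀) : ContinuousOn (fun τ => Φ τ s) (Ici t₀) :=
  fun τ hτ => (hΦ_deriv s hs τ hτ).continuousWithinAt

variable (hA : ContinuousOn A (Ici t₀))
  (hΦ_id : ∀ τ ∈ Ici t₀, Φ τ τ = 1)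
  (hΦ_deriv : ∀ τ ∈ Ici t₀, ∀ t ∈ Ici t₀,
      HasDerivWithinAt (fun s => Φ s τ) (A t * Φ t τ) (Ici t₀) t)

include hA hΦ_id hΦ_deriv

/-- Any solution is propagated by the transition matrix, in both time directions. -/
lemma sol_eq {x : ℝ → Fin n → ℝ}
    (hx : ∀ t ∈ Ici t₀, HasDerivWithinAt x (A t *ᵥ x t) (Ici t₀) t)
    {s : ℝ} (hs : s ∈ Ici t₀) : ∀ t ∈ Ici t₀, x t = Φ t s *ᵥ x s := by
  have h := uniq t₀ A hA x (fun τ => Φ τ s *ᵥ x s) hx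
    (phi_col_sol hΦ_deriv hs (x s)) hs ?_
  · exact fun t ht => h t ht
  · show x s = Φ s s *ᵥ x s
    rw [hΦ_id s hs, Matrix.one_mulVec]

lemma cocycle_vec {s t u : ℝ} (hs : s ∈ Ici t₀) (ht : t ∈ Ici t₀) (hu : u ∈ Ici t₀)
    (c : Fin n → ℝ) : Φ u t *ᵥ (Φ t s *ᵥ c) = Φ u s *ᵥ c := by
  have h := uniq t₀ A hA (fun τ => Φ τ t *ᵥ (Φ t s *ᵥ c)) (fun τ => Φ τ s *ᵥ c)
    (phi_col_sol hΦ_deriv ht (Φ t s *ᵥ c)) (phi_col_sol hΦ_deriv hs c) ht ?_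
  · exact h u hu
  · show Φ t t *ᵥ (Φ t s *ᵥ c) = Φ t s *ᵥ c
    rw [hΦ_id t ht, Matrix.one_mulVec]

lemma cocycle_mat {s t u : ℝ} (hs : s ∈ Ici t₀) (ht : t ∈ Ici t₀) (hu : u ∈ Ici t₀) :
    Φ u t * Φ t s = Φ u s := by
  ext i j
  have h := congrFun (cocycle_vec hA hΦ_id hΦ_deriv hs ht hu (Pi.single j 1)) i
  rw [Matrix.mulVec_mulVec] at h
  rw [Matrix.mulVec_single, Matrix.mulVec_single] at h
  simpa using h

lemma phi_mul_phi {s t : ℝ} (hs : s ∈ Ici t₀) (ht : t ∈ Ici t₀) :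
    Φ s t * Φ t s = 1 := by
  rw [cocycle_mat hA hΦ_id hΦ_deriv hs ht hs, hΦ_id s hs]

end Phi

lemma integrable_of_exp_bound {E : Type*} [NormedAddCommGroup E] {f : ℝ → E} {s : ℝ}
    (hf : AEStronglyMeasurable f (volume.restrict (Ioi s))) {c k : ℝ} (hk : 0 < k)
    (hb : ∀ τ ∈ Ioi s, ‖f τ‖ ≤ c * Real.exp (-k * τ)) : IntegrableOn f (Ioi s) := by
  have hg : IntegrableOn (fun τ => c * Real.exp (-k * τ)) (Ioi s) :=
    (exp_neg_integrableOn_Ioi s hk).const_mul c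
  refine hg.integrable.mono hf ?_
  refine (ae_restrict_iff' measurableSet_Ioi).mpr (Filter.Eventually.of_forall fun τ hτ => ?_)
  refine le_trans (hb τ hτ) ?_
  rw [Real.norm_eq_abs, abs_mul, Real.abs_exp]
  exact mul_le_mul_of_nonneg_right (le_abs_self c) (Real.exp_pos _).le

noncomputable def transCLM {n : ℕ} :
    Matrix (Fin n) (Fin n) ℝ →L[ℝ] Matrix (Fin n) (Fin n) ℝ :=
  LinearMap.toContinuousLinearMap
    { toFun := Matrix.transpose
      map_add' := fun M N => Matrix.transpose_add M N
      map_smul' := fun a M => Matrix.transpose_smul a M }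

lemma transCLM_apply {n : ℕ} (M : Matrix (Fin n) (Fin n) ℝ) : transCLM M = Mᵀ := rfl

noncomputable def quadCLM {n : ℕ} (c : Fin n → ℝ) : Matrix (Fin n) (Fin n) ℝ →L[ℝ] ℝ :=
  LinearMap.toContinuousLinearMap
    { toFun := fun M => c ⬝ᵥ (M *ᵥ c)
      map_add' := fun M N => by simp [Matrix.add_mulVec, dotProduct_add]
      map_smul' := fun a M => by
        simp [Matrix.smul_mulVec, dotProduct_smul, smul_eq_mul] }

lemma quadCLM_apply {n : ℕ} (c : Fin n → ℝ) (M : Matrix (Fin n) (Fin n) ℝ) :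
    quadCLM c M = c ⬝ᵥ (M *ᵥ c) := rfl

section HmatSec

variable {n : ℕ} {t₀ : ℝ} {A : ℝ → Matrix (Fin n) (Fin n) ℝ}
  {Φ : ℝ → ℝ → Matrix (Fin n) (Fin n) ℝ} {γ lam : ℝ}
  (hA : ContinuousOn A (Ici t₀))
  (hΦ_id : ∀ τ ∈ Ici t₀, Φ τ τ = 1)
  (hΦ_deriv : ∀ τ ∈ Ici t₀, ∀ t ∈ Ici t₀,
      HasDerivWithinAt (fun s => Φ s τ) (A t * Φ t τ) (Ici t₀) t)
  (hγ : 0 < γ) (hlam : 0 < lam)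
  (hUAS : ∀ τ ∈ Ici t₀, ∀ t ∈ Ici τ, ‖Φ t τ‖ ≤ γ * Real.exp (-lam * (t - τ)))

include hΦ_deriv in
lemma contOn_phiT_phi {s : ℝ} (hs : s ∈ Ici t₀) :
    ContinuousOn (fun τ => (Φ τ s)ᵀ * Φ τ s) (Ici t₀) := by
  have h1 : ContinuousOn (fun τ => Φ τ s) (Ici t₀) := contOn_phi hΦ_deriv hs
  have h2 : ContinuousOn (fun τ => (Φ τ s)ᵀ) (Ici t₀) :=
    (transCLM.continuous.comp_continuousOn h1)
  exact h2.mul h1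

include hΦ_deriv hγ hlam hUAS in
lemma integrableOn_phiT_phi {s : ℝ} (hs : s ∈ Ici t₀) :
    IntegrableOn (fun τ => (Φ τ s)ᵀ * Φ τ s) (Ioi s) := by
  refine integrable_of_exp_bound
    (((contOn_phiT_phi hΦ_deriv hs).mono (Ici_subset_Ici.mpr hs)).mono
      Ioi_subset_Ici_self |>.aestronglyMeasurable measurableSet_Ioi)
    (c := γ ^ 2 * Real.exp (2 * lam * s)) (k := 2 * lam) (by linarith) ?_
  intro τ hτ
  have hτ' : τ ∈ Ici s := mem_Ici.mpr (le_of_lt (mem_Ioi.mp hτ))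
  have hb := hUAS s hs τ hτ'
  have hT : (Φ τ s)ᵀ = (Φ τ s)ᴴ := by
    rw [← Matrix.star_eq_conjTranspose, star_eq_transpose]
  rw [hT, Matrix.l2_opNorm_conjTranspose_mul_self]
  have hnn : (0:ℝ) ≤ ‖Φ τ s‖ := norm_nonneg _
  have hrhs : γ * Real.exp (-lam * (τ - s)) * (γ * Real.exp (-lam * (τ - s)))
      = γ ^ 2 * Real.exp (2 * lam * s) * Real.exp (-(2 * lam) * τ) := by
    have e1 : Real.exp (-lam * (τ - s)) * Real.exp (-lam * (τ - s))
        = Real.exp (2 * lam * s + -(2 * lam) * τ) := by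
      rw [← Real.exp_add]; congr 1; ring
    have e2 : Real.exp (2 * lam * s) * Real.exp (-(2 * lam) * τ)
        = Real.exp (2 * lam * s + -(2 * lam) * τ) := by
      rw [← Real.exp_add]
    calc γ * Real.exp (-lam * (τ - s)) * (γ * Real.exp (-lam * (τ - s)))
        = γ ^ 2 * (Real.exp (-lam * (τ - s)) * Real.exp (-lam * (τ - s))) := by ring
      _ = γ ^ 2 * (Real.exp (2 * lam * s) * Real.exp (-(2 * lam) * τ)) := by rw [e1, e2]
      _ = _ := by ring
  calc ‖Φ τ s‖ * ‖Φ τ s‖ ≤ (γ * Real.exp (-lam * (τ - s))) * (γ * Real.exp (-lam * (τ - s))) :=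
        mul_le_mul hb hb hnn (by positivity)
    _ = _ := hrhs

include hΦ_deriv hγ hlam hUAS in
lemma Hmat_herm {s : ℝ} (hs : s ∈ Ici t₀) : (Hmat Φ s).IsHermitian := by
  have hint := integrableOn_phiT_phi hΦ_deriv hγ hlam hUAS hs
  have h2 := transCLM.integral_comp_comm hint.integrable
  have h1 : transCLM (Hmat Φ s) = Hmat Φ s := by
    rw [Hmat, ← h2]
    refine integral_congr_ae (Filter.Eventually.of_forall fun τ => ?_)
    show transCLM ((Φ τ s)ᵀ * Φ τ s) = (Φ τ s)ᵀ * Φ τ s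
    rw [transCLM_apply, Matrix.transpose_mul, Matrix.transpose_transpose]
  rw [transCLM_apply] at h1
  rw [Matrix.IsHermitian, ← Matrix.star_eq_conjTranspose, star_eq_transpose, h1]

include hΦ_deriv hγ hlam hUAS in
lemma quad_Hmat {s : ℝ} (hs : s ∈ Ici t₀) (c : Fin n → ℝ) :
    c ⬝ᵥ (Hmat Φ s *ᵥ c) = ∫ τ in Ioi s, (Φ τ s *ᵥ c) ⬝ᵥ (Φ τ s *ᵥ c) := by
  have hint := integrableOn_phiT_phi hΦ_deriv hγ hlam hUAS hs
  have h2 := (quadCLM c).integral_comp_comm hint.integrable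
  rw [Hmat, ← quadCLM_apply, ← h2]
  refine integral_congr_ae (Filter.Eventually.of_forall fun τ => ?_)
  show quadCLM c ((Φ τ s)ᵀ * Φ τ s) = (Φ τ s *ᵥ c) ⬝ᵥ (Φ τ s *ᵥ c)
  rw [quadCLM_apply, ← Matrix.mulVec_mulVec, Matrix.dotProduct_mulVec, Matrix.vecMul_transpose]

lemma continuous_selfdot {n : ℕ} : Continuous (fun v : Fin n → ℝ => v ⬝ᵥ v) := by
  unfold dotProduct
  exact continuous_finset_sum _ fun i _ => (continuous_apply i).mul (continuous_apply i)

include hΦ_deriv in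
lemma contOn_qfun {s : ℝ} (hs : s ∈ Ici t₀) (y : Fin n → ℝ) :
    ContinuousOn (fun τ => (Φ τ s *ᵥ y) ⬝ᵥ (Φ τ s *ᵥ y)) (Ici t₀) := by
  have h1 : ContinuousOn (fun τ => Φ τ s *ᵥ y) (Ici t₀) := by
    have := (colCLM y).continuous.comp_continuousOn (contOn_phi hΦ_deriv hs)
    exact this
  exact continuous_selfdot.comp_continuousOn h1

lemma qfun_eq_quad {s τ : ℝ} (y : Fin n → ℝ) :
    (Φ τ s *ᵥ y) ⬝ᵥ (Φ τ s *ᵥ y) = y ⬝ᵥ (((Φ τ s)ᵀ * Φ τ s) *ᵥ y) := by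
  symm
  rw [← Matrix.mulVec_mulVec, Matrix.dotProduct_mulVec, Matrix.vecMul_transpose]

include hΦ_deriv hγ hlam hUAS in
lemma integrableOn_qfun {s : ℝ} (hs : s ∈ Ici t₀) (y : Fin n → ℝ) :
    IntegrableOn (fun τ => (Φ τ s *ᵥ y) ⬝ᵥ (Φ τ s *ᵥ y)) (Ioi s) := by
  have hint := integrableOn_phiT_phi hΦ_deriv hγ hlam hUAS hs
  refine (hint.norm.mul_const (y ⬝ᵥ y)).mono
    (((contOn_qfun hΦ_deriv hs y).mono
      ((Ioi_subset_Ici_self).trans (Ici_subset_Ici.mpr hs))).aestronglyMeasurable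
      measurableSet_Ioi) ?_
  refine (ae_restrict_iff' measurableSet_Ioi).mpr (Filter.Eventually.of_forall fun τ _ => ?_)
  have h0 : (0:ℝ) ≤ (Φ τ s *ᵥ y) ⬝ᵥ (Φ τ s *ᵥ y) := dot_nonneg _
  have h1 : (Φ τ s *ᵥ y) ⬝ᵥ (Φ τ s *ᵥ y) ≤ ‖(Φ τ s)ᵀ * Φ τ s‖ * (y ⬝ᵥ y) := by
    rw [qfun_eq_quad]; exact dot_mulVec_le _ y
  rw [Real.norm_eq_abs, abs_of_nonneg h0, Real.norm_eq_abs]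
  exact h1.trans (le_abs_self _)

include hΦ_id hΦ_deriv hγ hlam hUAS in
lemma quad_Hmat_pos {s : ℝ} (hs : s ∈ Ici t₀) (y : Fin n → ℝ) (hy : y ⬝ᵥ y = 1) :
    0 < y ⬝ᵥ (Hmat Φ s *ᵥ y) := by
  set q : ℝ → ℝ := fun τ => (Φ τ s *ᵥ y) ⬝ᵥ (Φ τ s *ᵥ y) with hq
  have hq_int : IntegrableOn q (Ioi s) := integrableOn_qfun hΦ_deriv hγ hlam hUAS hs y
  have hq_cont : ContinuousWithinAt q (Ici s) s :=
    ((contOn_qfun hΦ_deriv hs y).mono (Ici_subset_Ici.mpr hs)) s self_mem_Ici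
  have hqs : q s = 1 := by rw [hq]; simp only [hΦ_id s hs, Matrix.one_mulVec]; exact hy
  have hev : ∀ᶠ τ in nhdsWithin s (Ici s), (1:ℝ)/2 < q τ := by
    refine hq_cont.eventually ?_
    rw [hqs]
    exact eventually_gt_nhds (by norm_num)
  rw [eventually_nhdsWithin_iff, Metric.eventually_nhds_iff] at hev
  obtain ⟨ε, hε, hball⟩ := hev
  set u : ℝ := s + ε/2 with hu
  have hsu : s < u := by rw [hu]; linarith
  have hsub : Ioc s u ⊆ {τ | (1:ℝ)/2 < q τ} := by
    intro τ hτ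
    refine hball ?_ hτ.1.le
    rw [Real.dist_eq, abs_of_nonneg (by linarith [hτ.1.le] : (0:ℝ) ≤ τ - s)]
    have h2 : τ ≤ s + ε / 2 := hτ.2
    linarith
  have h1 : ∫ τ in Ioc s u, q τ ∂volume ≤ ∫ τ in Ioi s, q τ ∂volume := by
    refine setIntegral_mono_set hq_int ?_ (HasSubset.Subset.eventuallyLE Ioc_subset_Ioi_self)
    exact (ae_restrict_iff' measurableSet_Ioi).mpr
      (Filter.Eventually.of_forall fun τ _ => dot_nonneg _)
  have h2 : ∫ τ in Ioc s u, (1:ℝ)/2 ∂volume ≤ ∫ τ in Ioc s u, q τ ∂volume := by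
    refine setIntegral_mono_on (integrableOn_const ?_)
      (hq_int.mono_set Ioc_subset_Ioi_self) measurableSet_Ioc
      (fun τ hτ => (hsub hτ).le)
    rw [Real.volume_Ioc]
    exact ENNReal.ofReal_ne_top
  have h3 : ∫ τ in Ioc s u, (1:ℝ)/2 ∂volume = (u - s) * (1/2) := by
    rw [setIntegral_const, measureReal_def, Real.volume_Ioc, ENNReal.toReal_ofReal (by linarith)]
    simp [smul_eq_mul]
  have h4 : 0 < (u - s) * ((1:ℝ)/2) := by
    rw [hu]; nlinarith
  have h5 := quad_Hmat hΦ_deriv hγ hlam hUAS hs y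
  rw [h5]
  calc (0:ℝ) < (u - s) * (1/2) := h4
    _ = ∫ τ in Ioc s u, (1:ℝ)/2 ∂volume := h3.symm
    _ ≤ ∫ τ in Ioc s u, q τ ∂volume := h2
    _ ≤ ∫ τ in Ioi s, q τ ∂volume := h1

include hΦ_id hΦ_deriv hγ hlam hUAS in
lemma lambdaMin_Hmat_pos (hn : 0 < n) {s : ℝ} (hs : s ∈ Ici t₀) :
    0 < lambdaMin (Hmat Φ s) := by
  obtain ⟨y, hy1, hy2⟩ := lambdaMin_attained hn (Hmat_herm hΦ_deriv hγ hlam hUAS hs)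
  rw [← hy2]
  exact quad_Hmat_pos hΦ_id hΦ_deriv hγ hlam hUAS hs y hy1

include hΦ_id hΦ_deriv hγ hlam hUAS in
lemma lambdaMax_Hmat_pos (hn : 0 < n) {s : ℝ} (hs : s ∈ Ici t₀) :
    0 < lambdaMax (Hmat Φ s) := by
  obtain ⟨y, hy1, hy2⟩ := lambdaMax_attained hn (Hmat_herm hΦ_deriv hγ hlam hUAS hs)
  rw [← hy2]
  exact quad_Hmat_pos hΦ_id hΦ_deriv hγ hlam hUAS hs y hy1

end HmatSec

/-- FTC for the tail integral `u ↦ ∫_{Ioi u} f`. -/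
lemma hasDerivWithinAt_tail {E : Type*} [NormedAddCommGroup E] [NormedSpace ℝ E]
    [CompleteSpace E] {f : ℝ → E} {t₀ : ℝ} (hc : ContinuousOn f (Ici t₀))
    (hint : IntegrableOn f (Ioi t₀)) {b : ℝ} (hb : b ∈ Ici t₀) :
    HasDerivWithinAt (fun u => ∫ τ in Ioi u, f τ) (-f b) (Ici t₀) b := by
  have key : ∀ u ∈ Ici t₀, ∫ τ in Ioi u, f τ
      = (∫ τ in Ioi t₀, f τ) - ∫ τ in t₀..u, f τ := by
    intro u hu
    rw [intervalIntegral.integral_of_le hu, eq_sub_iff_add_eq, add_comm,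
      ← MeasureTheory.setIntegral_union (Ioc_disjoint_Ioi le_rfl) measurableSet_Ioi
        (hint.mono_set (Ioc_subset_Ioi_self)) (hint.mono_set (Ioi_subset_Ioi hu)),
      Ioc_union_Ioi_eq_Ioi hu]
  have hG : HasDerivWithinAt (fun u => ∫ τ in t₀..u, f τ) (f b) (Ici t₀) b := by
    have hInt : IntervalIntegrable f volume t₀ b := by
      refine (hc.mono ?_).intervalIntegrable
      rw [uIcc_of_le hb]
      exact Icc_subset_Ici_self
    rcases eq_or_lt_of_le (mem_Ici.mp hb : t₀ ≤ b) with heq | hlt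
    · subst heq
      exact intervalIntegral.integral_hasDerivWithinAt_right (t := Ioi t₀) hInt
        ⟨Ici t₀, Filter.mem_of_superset self_mem_nhdsWithin Ioi_subset_Ici_self,
          hc.aestronglyMeasurable measurableSet_Ici⟩
        ((hc t₀ self_mem_Ici).mono Ioi_subset_Ici_self)
    · exact (intervalIntegral.integral_hasDerivAt_right hInt
        ⟨Ici t₀, Ici_mem_nhds hlt, hc.aestronglyMeasurable measurableSet_Ici⟩
        ((hc b hb).continuousAt (Ici_mem_nhds hlt))).hasDerivWithinAt
  have h2 : HasDerivWithinAt (fun u => (∫ τ in Ioi t₀, f τ) - ∫ τ in t₀..u, f τ)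
      (-f b) (Ici t₀) b := by
    have := (hasDerivWithinAt_const b (Ici t₀) (∫ τ in Ioi t₀, f τ)).sub hG
    rwa [zero_sub] at this
  exact h2.congr (fun u hu => key u hu) (key b hb)

/-- `M ↦ Bᵀ M C`. -/
noncomputable def conjCLM {n : ℕ} (B C : Matrix (Fin n) (Fin n) ℝ) :
    Matrix (Fin n) (Fin n) ℝ →L[ℝ] Matrix (Fin n) (Fin n) ℝ :=
  LinearMap.toContinuousLinearMap
    { toFun := fun M => Bᵀ * M * C
      map_add' := fun M N => by noncomm_ring
      map_smul' := fun a M => by simp [Matrix.mul_smul, Matrix.smul_mul] }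

lemma conjCLM_apply {n : ℕ} (B C M : Matrix (Fin n) (Fin n) ℝ) :
    conjCLM B C M = Bᵀ * M * C := rfl

section Continuity

variable {n : ℕ} {t₀ : ℝ} {A : ℝ → Matrix (Fin n) (Fin n) ℝ}
  {Φ : ℝ → ℝ → Matrix (Fin n) (Fin n) ℝ} {γ lam : ℝ}
  (hA : ContinuousOn A (Ici t₀))
  (hΦ_id : ∀ τ ∈ Ici t₀, Φ τ τ = 1)
  (hΦ_deriv : ∀ τ ∈ Ici t₀, ∀ t ∈ Ici t₀,
      HasDerivWithinAt (fun s => Φ s τ) (A t * Φ t τ) (Ici t₀) t)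
  (hγ : 0 < γ) (hlam : 0 < lam)
  (hUAS : ∀ τ ∈ Ici t₀, ∀ t ∈ Ici τ, ‖Φ t τ‖ ≤ γ * Real.exp (-lam * (t - τ)))

include hA hΦ_id hΦ_deriv in
lemma contOn_Q : ContinuousOn (fun s => Φ t₀ s) (Ici t₀) := by
  have hP : ContinuousOn (fun t => Φ t t₀) (Ici t₀) := contOn_phi hΦ_deriv self_mem_Ici
  have hQR : ∀ s ∈ Ici t₀, Φ t₀ s = Ring.inverse (Φ s t₀) := by
    intro s hs
    have h1 : Φ s t₀ * Φ t₀ s = 1 := phi_mul_phi hA hΦ_id hΦ_deriv hs self_mem_Ici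
    have h2 : Φ t₀ s * Φ s t₀ = 1 := phi_mul_phi hA hΦ_id hΦ_deriv self_mem_Ici hs
    have := Ring.inverse_unit (⟨Φ s t₀, Φ t₀ s, h1, h2⟩ : (Matrix (Fin n) (Fin n) ℝ)ˣ)
    rw [this]
    rfl
  refine ContinuousOn.congr ?_ hQR
  intro s hs
  have h1 : Φ s t₀ * Φ t₀ s = 1 := phi_mul_phi hA hΦ_id hΦ_deriv hs self_mem_Ici
  have h2 : Φ t₀ s * Φ s t₀ = 1 := phi_mul_phi hA hΦ_id hΦ_deriv self_mem_Ici hs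
  have hcA : ContinuousAt (Ring.inverse : Matrix (Fin n) (Fin n) ℝ → Matrix (Fin n) (Fin n) ℝ)
      (Φ s t₀) :=
    NormedRing.inverse_continuousAt (⟨Φ s t₀, Φ t₀ s, h1, h2⟩ : (Matrix (Fin n) (Fin n) ℝ)ˣ)
  exact ContinuousAt.comp_continuousWithinAt (f := fun t => Φ t t₀)
    (g := Ring.inverse) hcA (hP s hs)

include hA hΦ_id hΦ_deriv hγ hlam hUAS in
lemma contOn_Hmat : ContinuousOn (Hmat Φ) (Ici t₀) := by
  set P : ℝ → Matrix (Fin n) (Fin n) ℝ := fun t => Φ t t₀ with hPdef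
  set Q : ℝ → Matrix (Fin n) (Fin n) ℝ := fun s => Φ t₀ s with hQdef
  set K : ℝ → Matrix (Fin n) (Fin n) ℝ := fun u => ∫ τ in Ioi u, (P τ)ᵀ * P τ with hKdef
  have hf_int : IntegrableOn (fun τ => (P τ)ᵀ * P τ) (Ioi t₀) :=
    integrableOn_phiT_phi hΦ_deriv hγ hlam hUAS self_mem_Ici
  have hf_cont : ContinuousOn (fun τ => (P τ)ᵀ * P τ) (Ici t₀) :=
    contOn_phiT_phi hΦ_deriv self_mem_Ici
  have hK_cont : ContinuousOn K (Ici t₀) := fun b hb =>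
    (hasDerivWithinAt_tail hf_cont hf_int hb).continuousWithinAt
  have hdecomp : ∀ s ∈ Ici t₀, Hmat Φ s = (Q s)ᵀ * K s * Q s := by
    intro s hs
    have hKs_int : IntegrableOn (fun τ => (P τ)ᵀ * P τ) (Ioi s) :=
      hf_int.mono_set (Ioi_subset_Ioi hs)
    have h2 := (conjCLM (Q s) (Q s)).integral_comp_comm hKs_int.integrable
    rw [Hmat, hKdef, ← conjCLM_apply, ← h2]
    refine setIntegral_congr_fun measurableSet_Ioi (fun τ hτ => ?_)
    have hτ' : τ ∈ Ici t₀ := mem_Ici.mpr (le_trans (mem_Ici.mp hs) (le_of_lt (mem_Ioi.mp hτ)))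
    show (Φ τ s)ᵀ * Φ τ s = conjCLM (Q s) (Q s) ((P τ)ᵀ * P τ)
    rw [conjCLM_apply]
    have hco : P τ * Q s = Φ τ s := cocycle_mat hA hΦ_id hΦ_deriv hs self_mem_Ici hτ'
    rw [← hco, Matrix.transpose_mul]
    noncomm_ring
  refine ContinuousOn.congr ?_ hdecomp
  have hQ : ContinuousOn Q (Ici t₀) := contOn_Q hA hΦ_id hΦ_deriv
  have hQT : ContinuousOn (fun s => (Q s)ᵀ) (Ici t₀) :=
    transCLM.continuous.comp_continuousOn hQ
  exact (hQT.mul hK_cont).mul hQ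

end Continuity

/-- Continuity of `lambdaMax`/`lambdaMin` along a continuous Hermitian family. -/
lemma contOn_lambda {n : ℕ} (hn : 0 < n) {F : ℝ → Matrix (Fin n) (Fin n) ℝ} {s : Set ℝ}
    (hF : ContinuousOn F s) (hherm : ∀ u ∈ s, (F u).IsHermitian) :
    ContinuousOn (fun u => lambdaMax (F u)) s ∧
    ContinuousOn (fun u => lambdaMin (F u)) s := by
  constructor <;>
  · intro u hu
    rw [ContinuousWithinAt, tendsto_iff_dist_tendsto_zero]
    have hd := (hF u hu).tendsto
    have hdist : Filter.Tendsto (fun v => dist (F v) (F u)) (nhdsWithin u s) (nhds 0) := by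
      rw [← dist_self (F u)]
      exact hd.dist tendsto_const_nhds
    refine squeeze_zero' ?_ ?_ hdist
    · exact Filter.Eventually.of_forall fun v => dist_nonneg
    · refine Filter.eventually_mem_set.mpr self_mem_nhdsWithin |>.mono fun v hv => ?_
      rw [Real.dist_eq, dist_eq_norm]
      first
      | exact abs_lambdaMax_sub_le hn (hherm v hv) (hherm u hu)
      | exact abs_lambdaMin_sub_le hn (hherm v hv) (hherm u hu)

lemma dot_pos {n : ℕ} {v : Fin n → ℝ} (hv : v ≠ 0) : 0 < v ⬝ᵥ v := by
  obtain ⟨i, hi⟩ : ∃ i, v i ≠ 0 := by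
    by_contra h
    push_neg at h
    exact hv (funext h)
  refine Finset.sum_pos' (fun j _ => mul_self_nonneg _) ⟨i, Finset.mem_univ i, ?_⟩
  exact mul_self_pos.mpr hi

section Main

variable {n : ℕ} {t₀ : ℝ} {A : ℝ → Matrix (Fin n) (Fin n) ℝ}
  {Φ : ℝ → ℝ → Matrix (Fin n) (Fin n) ℝ} {γ lam : ℝ} {x : ℝ → Fin n → ℝ}
  (hn : 0 < n)
  (hA : ContinuousOn A (Ici t₀))
  (hΦ_id : ∀ τ ∈ Ici t₀, Φ τ τ = 1)
  (hΦ_deriv : ∀ τ ∈ Ici t₀, ∀ t ∈ Ici t₀,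
      HasDerivWithinAt (fun s => Φ s τ) (A t * Φ t τ) (Ici t₀) t)
  (hγ : 0 < γ) (hlam : 0 < lam)
  (hUAS : ∀ τ ∈ Ici t₀, ∀ t ∈ Ici τ, ‖Φ t τ‖ ≤ γ * Real.exp (-lam * (t - τ)))
  (hx : ∀ t ∈ Ici t₀, HasDerivWithinAt x (A t *ᵥ x t) (Ici t₀) t)
  (hxne : x t₀ ≠ 0)

include hn hA hΦ_id hΦ_deriv hγ hlam hUAS hx hxne in
lemma main_bounds : ∀ t ∈ Ici t₀,
    (lambdaMin (Hmat Φ t₀) / lambdaMax (Hmat Φ t)) * (x t₀ ⬝ᵥ x t₀) *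
        Real.exp (-∫ τ in t₀..t, 1 / lambdaMin (Hmat Φ τ)) ≤ x t ⬝ᵥ x t ∧
    x t ⬝ᵥ x t ≤ (lambdaMax (Hmat Φ t₀) / lambdaMin (Hmat Φ t)) * (x t₀ ⬝ᵥ x t₀) *
        Real.exp (-∫ τ in t₀..t, 1 / lambdaMax (Hmat Φ τ)) := by
  intro t ht
  set q : ℝ → ℝ := fun τ => x τ ⬝ᵥ x τ with hqdef
  set V : ℝ → ℝ := fun u => ∫ τ in Ioi u, q τ with hVdef
  -- basic facts about the solution
  have hsol : ∀ s ∈ Ici t₀, ∀ u ∈ Ici t₀, x u = Φ u s *ᵥ x s := fun s hs =>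
    sol_eq hA hΦ_id hΦ_deriv hx hs
  have hxne' : ∀ s ∈ Ici t₀, x s ≠ 0 := by
    intro s hs hx0
    apply hxne
    rw [hsol s hs t₀ self_mem_Ici, hx0, Matrix.mulVec_zero]
  have hqpos : ∀ s ∈ Ici t₀, 0 < q s := fun s hs => dot_pos (hxne' s hs)
  have hqcont : ContinuousOn q (Ici t₀) := by
    have hxc : ContinuousOn x (Ici t₀) := fun τ hτ => (hx τ hτ).continuousWithinAt
    exact continuous_selfdot.comp_continuousOn hxc
  have hq_eq : ∀ s ∈ Ici t₀, EqOn q (fun τ => (Φ τ s *ᵥ x s) ⬝ᵥ (Φ τ s *ᵥ x s)) (Ioi s) := by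
    intro s hs τ hτ
    have hτ' : τ ∈ Ici t₀ := mem_Ici.mpr (le_trans (mem_Ici.mp hs) (le_of_lt (mem_Ioi.mp hτ)))
    show x τ ⬝ᵥ x τ = _
    rw [hsol s hs τ hτ']
  have hqint : ∀ s ∈ Ici t₀, IntegrableOn q (Ioi s) := by
    intro s hs
    exact IntegrableOn.congr_fun (integrableOn_qfun hΦ_deriv hγ hlam hUAS hs (x s))
      (fun τ hτ => ((hq_eq s hs) hτ).symm) measurableSet_Ioi
  -- V equals the quadratic form of Hmat
  have hVquad : ∀ s ∈ Ici t₀, V s = x s ⬝ᵥ (Hmat Φ s *ᵥ x s) := by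
    intro s hs
    rw [hVdef, quad_Hmat hΦ_deriv hγ hlam hUAS hs (x s)]
    exact setIntegral_congr_fun measurableSet_Ioi (hq_eq s hs)
  -- Hermitian and eigenvalue facts
  have hherm : ∀ s ∈ Ici t₀, (Hmat Φ s).IsHermitian := fun s hs =>
    Hmat_herm hΦ_deriv hγ hlam hUAS hs
  have hminpos : ∀ s ∈ Ici t₀, 0 < lambdaMin (Hmat Φ s) := fun s hs =>
    lambdaMin_Hmat_pos hΦ_id hΦ_deriv hγ hlam hUAS hn hs
  have hmaxpos : ∀ s ∈ Ici t₀, 0 < lambdaMax (Hmat Φ s) := fun s hs =>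
    lambdaMax_Hmat_pos hΦ_id hΦ_deriv hγ hlam hUAS hn hs
  have hray : ∀ s ∈ Ici t₀,
      lambdaMin (Hmat Φ s) * q s ≤ V s ∧ V s ≤ lambdaMax (Hmat Φ s) * q s := by
    intro s hs
    rw [hVquad s hs]
    exact rayleigh hn (hherm s hs) (x s)
  have hVpos : ∀ s ∈ Ici t₀, 0 < V s := by
    intro s hs
    have := (hray s hs).1
    nlinarith [hminpos s hs, hqpos s hs]
  -- derivative of V
  have hVderiv : ∀ b ∈ Ici t₀, HasDerivWithinAt V (-(q b)) (Ici t₀) b := fun b hb =>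
    hasDerivWithinAt_tail hqcont (hqint t₀ self_mem_Ici) hb
  -- derivative of log V
  have hLderiv : ∀ b ∈ Ici t₀,
      HasDerivWithinAt (fun u => Real.log (V u)) (-(q b) / V b) (Ici t₀) b := fun b hb =>
    (hVderiv b hb).log (hVpos b hb).ne'
  -- continuity of the lambda functions
  have hHcont := contOn_Hmat hA hΦ_id hΦ_deriv hγ hlam hUAS
  obtain ⟨hlmaxcont, hlmincont⟩ := contOn_lambda hn hHcont hherm
  -- FTC on [t₀, t]
  have hIccsub : Icc t₀ t ⊆ Ici t₀ := Icc_subset_Ici_self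
  have hLcont : ContinuousOn (fun u => Real.log (V u)) (Icc t₀ t) := fun u hu =>
    (((hLderiv u (hIccsub hu)).continuousWithinAt).mono hIccsub)
  have hg_cont : ContinuousOn (fun u => -(q u) / V u) (Icc t₀ t) := by
    refine ContinuousOn.div ?_ ?_ ?_
    · exact (hqcont.mono hIccsub).neg
    · exact fun u hu => ((hVderiv u (hIccsub hu)).continuousWithinAt).mono hIccsub
    · exact fun u hu => (hVpos u (hIccsub hu)).ne'
  have hg_int : IntervalIntegrable (fun u => -(q u) / V u) volume t₀ t :=
    (hg_cont.mono (by rw [uIcc_of_le ht])).intervalIntegrable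
  have hFTC : ∫ u in t₀..t, -(q u) / V u
      = Real.log (V t) - Real.log (V t₀) := by
    refine intervalIntegral.integral_eq_sub_of_hasDeriv_right_of_le ht hLcont ?_ hg_int
    intro u hu
    have hu' : u ∈ Ici t₀ := le_of_lt hu.1
    exact (hLderiv u hu').mono (Ioi_subset_Ici hu.1.le)
  -- integrability of the lambda integrands on [t₀, t]
  have hmin_int : IntervalIntegrable (fun τ => 1 / lambdaMin (Hmat Φ τ)) volume t₀ t := by
    refine (ContinuousOn.div continuousOn_const (hlmincont.mono ?_) ?_).intervalIntegrable
    · rw [uIcc_of_le ht]; exact hIccsub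
    · rw [uIcc_of_le ht]; exact fun u hu => (hminpos u (hIccsub hu)).ne'
  have hmax_int : IntervalIntegrable (fun τ => 1 / lambdaMax (Hmat Φ τ)) volume t₀ t := by
    refine (ContinuousOn.div continuousOn_const (hlmaxcont.mono ?_) ?_).intervalIntegrable
    · rw [uIcc_of_le ht]; exact hIccsub
    · rw [uIcc_of_le ht]; exact fun u hu => (hmaxpos u (hIccsub hu)).ne'
  -- pointwise comparisons and integral monotonicity
  have hup : Real.log (V t) - Real.log (V t₀) ≤ -∫ τ in t₀..t, 1 / lambdaMax (Hmat Φ τ) := by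
    rw [← hFTC, ← intervalIntegral.integral_neg]
    refine intervalIntegral.integral_mono_on ht hg_int hmax_int.neg ?_
    intro u hu
    have hu' := hIccsub hu
    have h1 : V u ≤ lambdaMax (Hmat Φ u) * q u := (hray u hu').2
    have h2 := hVpos u hu'
    have h3 := hqpos u hu'
    have h4 := hmaxpos u hu'
    rw [neg_div, neg_le_neg_iff, div_le_div_iff₀ h4 h2]
    nlinarith
  have hlo : -∫ τ in t₀..t, 1 / lambdaMin (Hmat Φ τ) ≤ Real.log (V t) - Real.log (V t₀) := by
    rw [← hFTC, ← intervalIntegral.integral_neg]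
    refine intervalIntegral.integral_mono_on ht hmin_int.neg hg_int ?_
    intro u hu
    have hu' := hIccsub hu
    have h1 : lambdaMin (Hmat Φ u) * q u ≤ V u := (hray u hu').1
    have h2 := hVpos u hu'
    have h3 := hqpos u hu'
    have h4 := hminpos u hu'
    rw [neg_div, neg_le_neg_iff, div_le_div_iff₀ h2 h4]
    nlinarith
  -- exponentiate
  have hVup : V t ≤ V t₀ * Real.exp (-∫ τ in t₀..t, 1 / lambdaMax (Hmat Φ τ)) := by
    have := Real.exp_le_exp.mpr (sub_le_iff_le_add.mp hup)
    rw [Real.exp_log (hVpos t ht), Real.exp_add, Real.exp_log (hVpos t₀ self_mem_Ici)] at this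
    linarith [this]
  have hVlo : V t₀ * Real.exp (-∫ τ in t₀..t, 1 / lambdaMin (Hmat Φ τ)) ≤ V t := by
    have h5 : Real.log (V t₀) + (-∫ τ in t₀..t, 1 / lambdaMin (Hmat Φ τ)) ≤ Real.log (V t) := by
      linarith [hlo]
    have := Real.exp_le_exp.mpr h5
    rw [Real.exp_log (hVpos t ht), Real.exp_add, Real.exp_log (hVpos t₀ self_mem_Ici)] at this
    linarith [this]
  -- assemble
  have hq_t := hqpos t ht
  have hq_t0 := hqpos t₀ self_mem_Ici
  have hmin_t := hminpos t ht
  have hmax_t := hmaxpos t ht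
  have hmin_t0 := hminpos t₀ self_mem_Ici
  have hmax_t0 := hmaxpos t₀ self_mem_Ici
  have hray_t := hray t ht
  have hray_t0 := hray t₀ self_mem_Ici
  have hexp1 : (0:ℝ) < Real.exp (-∫ τ in t₀..t, 1 / lambdaMin (Hmat Φ τ)) := Real.exp_pos _
  have hexp2 : (0:ℝ) < Real.exp (-∫ τ in t₀..t, 1 / lambdaMax (Hmat Φ τ)) := Real.exp_pos _
  constructor
  · -- lower bound : (λmin t₀ / λmax t) q t₀ e^{-I_min} ≤ q t
    rw [div_mul_eq_mul_div, div_mul_eq_mul_div, div_le_iff₀ hmax_t]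
    -- λmin t₀ * q t₀ * e ≤ q t * λmax t
    have c1 : lambdaMin (Hmat Φ t₀) * q t₀ ≤ V t₀ := hray_t0.1
    have c2 : V t ≤ lambdaMax (Hmat Φ t) * q t := hray_t.2
    nlinarith [hVlo]
  · -- upper bound
    rw [div_mul_eq_mul_div, div_mul_eq_mul_div, le_div_iff₀ hmin_t]
    have c1 : V t₀ ≤ lambdaMax (Hmat Φ t₀) * q t₀ := hray_t0.2
    have c2 : lambdaMin (Hmat Φ t) * q t ≤ V t := hray_t.1
    nlinarith [hVup]

end Main

end Stmt11

open Stmt11 in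
/-- for a uniformly asymptotically stable system and any solution `x`, for all
`t ≥ t₀`:
`(λ_min[H(t₀)]/λ_max[H(t)])^{1/2} ‖x(t₀)‖ e^{−(1/2)∫_{t₀}^t dτ/λ_min[H(τ)]} ≤ ‖x(t)‖
  ≤ (λ_max[H(t₀)]/λ_min[H(t)])^{1/2} ‖x(t₀)‖ e^{−(1/2)∫_{t₀}^t dτ/λ_max[H(τ)]}`. -/
theorem stmt11 {n : ℕ} (t₀ : ℝ) (A : ℝ → Matrix (Fin n) (Fin n) ℝ)
    (hA : ContinuousOn A (Ici t₀))
    (Φ : ℝ → ℝ → Matrix (Fin n) (Fin n) ℝ)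
    (hΦ_id : ∀ τ ∈ Ici t₀, Φ τ τ = 1)
    (hΦ_deriv : ∀ τ ∈ Ici t₀, ∀ t ∈ Ici t₀,
      HasDerivWithinAt (fun s => Φ s τ) (A t * Φ t τ) (Ici t₀) t)
    (γ lam : ℝ) (hγ : 0 < γ) (hlam : 0 < lam)
    (hUAS : ∀ τ ∈ Ici t₀, ∀ t ∈ Ici τ, ‖Φ t τ‖ ≤ γ * Real.exp (-lam * (t - τ)))
    (x : ℝ → Fin n → ℝ)
    (hx : ∀ t ∈ Ici t₀, HasDerivWithinAt x (A t *ᵥ x t) (Ici t₀) t) :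
    ∀ t ∈ Ici t₀,
      Real.sqrt (lambdaMin (Hmat Φ t₀) / lambdaMax (Hmat Φ t)) * euclNorm (x t₀) *
          Real.exp (-(1 / 2) * ∫ τ in t₀..t, 1 / lambdaMin (Hmat Φ τ))
        ≤ euclNorm (x t) ∧
      euclNorm (x t)
        ≤ Real.sqrt (lambdaMax (Hmat Φ t₀) / lambdaMin (Hmat Φ t)) * euclNorm (x t₀) *
            Real.exp (-(1 / 2) * ∫ τ in t₀..t, 1 / lambdaMax (Hmat Φ τ)) := by
  intro t ht
  rcases Nat.eq_zero_or_pos n with hn0 | hn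
  · subst hn0
    have he : ∀ y : Fin 0 → ℝ, euclNorm y = 0 := fun y => by
      simp [euclNorm, dotProduct]
    have hsp : ∀ M : Matrix (Fin 0) (Fin 0) ℝ, spectrum ℝ M = ∅ := fun M => by
      ext k
      simp [spectrum.mem_iff, isUnit_of_subsingleton]
    constructor <;>
      simp [he, lambdaMin, lambdaMax, hsp, Real.sInf_empty, Real.sSup_empty]
  · rcases eq_or_ne (x t₀) 0 with hx0 | hxne
    · have hzero : x t = 0 := by
        rw [sol_eq hA hΦ_id hΦ_deriv hx self_mem_Ici t ht, hx0, Matrix.mulVec_zero]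
      have he0 : euclNorm (0 : Fin n → ℝ) = 0 := by
        simp [euclNorm, dotProduct]
      rw [hzero, hx0, he0]
      constructor <;> simp
    · have hmb := main_bounds hn hA hΦ_id hΦ_deriv hγ hlam hUAS hx hxne t ht
      have hq_t0 : (0:ℝ) ≤ x t₀ ⬝ᵥ x t₀ := dot_nonneg _
      have hmin_t0 := lambdaMin_Hmat_pos hΦ_id hΦ_deriv hγ hlam hUAS hn (self_mem_Ici (a := t₀))
      have hmax_t0 := lambdaMax_Hmat_pos hΦ_id hΦ_deriv hγ hlam hUAS hn (self_mem_Ici (a := t₀))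
      have hmin_t := lambdaMin_Hmat_pos hΦ_id hΦ_deriv hγ hlam hUAS hn ht
      have hmax_t := lambdaMax_Hmat_pos hΦ_id hΦ_deriv hγ hlam hUAS hn ht
      have hse : ∀ I : ℝ, Real.sqrt (Real.exp (-I)) = Real.exp (-(1/2) * I) := by
        intro I
        rw [show -I = (-(1/2)*I) + (-(1/2)*I) by ring, Real.exp_add]
        exact Real.sqrt_mul_self (Real.exp_pos _).le
      have hsqrt_prod : ∀ (r : ℝ), 0 ≤ r → ∀ (I : ℝ),
          Real.sqrt (r * (x t₀ ⬝ᵥ x t₀) * Real.exp (-I))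
            = Real.sqrt r * euclNorm (x t₀) * Real.exp (-(1/2) * I) := by
        intro r hr I
        rw [Real.sqrt_mul (mul_nonneg hr hq_t0), Real.sqrt_mul hr, hse]
        rfl
      constructor
      · have h1 := hmb.1
        have hr : (0:ℝ) ≤ lambdaMin (Hmat Φ t₀) / lambdaMax (Hmat Φ t) :=
          le_of_lt (div_pos hmin_t0 hmax_t)
        have h2 : Real.sqrt (lambdaMin (Hmat Φ t₀) / lambdaMax (Hmat Φ t) * (x t₀ ⬝ᵥ x t₀) *
            Real.exp (-∫ τ in t₀..t, 1 / lambdaMin (Hmat Φ τ))) ≤ Real.sqrt (x t ⬝ᵥ x t) :=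
          Real.sqrt_le_sqrt h1
        rw [hsqrt_prod _ hr] at h2
        exact h2
      · have h1 := hmb.2
        have hr : (0:ℝ) ≤ lambdaMax (Hmat Φ t₀) / lambdaMin (Hmat Φ t) :=
          le_of_lt (div_pos hmax_t0 hmin_t)
        have h2 : Real.sqrt (x t ⬝ᵥ x t) ≤
            Real.sqrt (lambdaMax (Hmat Φ t₀) / lambdaMin (Hmat Φ t) * (x t₀ ⬝ᵥ x t₀) *
              Real.exp (-∫ τ in t₀..t, 1 / lambdaMax (Hmat Φ τ))) :=
          Real.sqrt_le_sqrt h1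
        rw [hsqrt_prod _ hr] at h2
        exact h2
end

section
/- Let A be a constant real n×n matrix such that there exist constants γ, λ > 0 with ‖e^{At}‖_I ≤ γ·e^{−λt} for all t ≥ 0. Then the integral H = ∫_0^∞ e^{Aᵀτ}·e^{Aτ} dτ converges, H is symmetric and positive definite, and H satisfies the Lyapunov equation Aᵀ·H + H·A = −I. -/
open scoped Matrix
open scoped Matrix.Norms.L2Operator  -- `‖·‖` on matrices is the operator norm induced by the Euclidean norm
open Set MeasureTheory

/-- if `A` is a constant real `n×n` matrix with `‖e^{At}‖ ≤ γ e^{−λt}` for all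
`t ≥ 0` (with `γ, λ > 0`), then `H = ∫_0^∞ e^{Aᵀτ} e^{Aτ} dτ` converges, is symmetric and
positive definite, and satisfies the Lyapunov equation `AᵀH + HA = −I`. -/
theorem stmt14 {n : ℕ} (A : Matrix (Fin n) (Fin n) ℝ)
    (γ lam : ℝ) (hγ : 0 < γ) (hlam : 0 < lam)
    (hUAS : ∀ t : ℝ, 0 ≤ t →
      ‖NormedSpace.exp (t • A)‖ ≤ γ * Real.exp (-lam * t)) :
    IntegrableOn
        (fun τ : ℝ => NormedSpace.exp (τ • Aᵀ) * NormedSpace.exp (τ • A)) (Ioi 0) ∧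
    (∫ τ in Ioi (0 : ℝ), NormedSpace.exp (τ • Aᵀ) * NormedSpace.exp (τ • A))ᵀ
        = ∫ τ in Ioi (0 : ℝ), NormedSpace.exp (τ • Aᵀ) * NormedSpace.exp (τ • A) ∧
    (∀ x : Fin n → ℝ, x ≠ 0 →
      0 < x ⬝ᵥ ((∫ τ in Ioi (0 : ℝ),
        NormedSpace.exp (τ • Aᵀ) * NormedSpace.exp (τ • A)) *ᵥ x)) ∧
    Aᵀ * (∫ τ in Ioi (0 : ℝ), NormedSpace.exp (τ • Aᵀ) * NormedSpace.exp (τ • A)) +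
        (∫ τ in Ioi (0 : ℝ), NormedSpace.exp (τ • Aᵀ) * NormedSpace.exp (τ • A)) * A
      = -1 := by
  set f : ℝ → Matrix (Fin n) (Fin n) ℝ :=
    fun τ : ℝ => NormedSpace.exp (τ • Aᵀ) * NormedSpace.exp (τ • A) with hf
  -- basic facts
  have hexpT : ∀ τ : ℝ, NormedSpace.exp (τ • Aᵀ) = (NormedSpace.exp (τ • A))ᵀ := by
    intro τ
    rw [← Matrix.transpose_smul, Matrix.exp_transpose]
  have hnormT : ∀ t : ℝ, 0 ≤ t →
      ‖NormedSpace.exp (t • Aᵀ)‖ ≤ γ * Real.exp (-lam * t) := by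
    intro t ht
    rw [hexpT, ← Matrix.conjTranspose_eq_transpose_of_trivial,
      Matrix.l2_opNorm_conjTranspose]
    exact hUAS t ht
  have hcontexp : ∀ B : Matrix (Fin n) (Fin n) ℝ,
      Continuous fun t : ℝ => NormedSpace.exp (t • B) := fun B =>
    continuous_iff_continuousAt.2 fun t => (hasDerivAt_exp_smul_const B t).continuousAt
  have hcont : Continuous f := ((hcontexp Aᵀ).mul (hcontexp A))
  have hbound : ∀ τ : ℝ, 0 ≤ τ → ‖f τ‖ ≤ γ * γ * Real.exp (-(2 * lam) * τ) := by
    intro τ hτ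
    calc ‖f τ‖ ≤ ‖NormedSpace.exp (τ • Aᵀ)‖ * ‖NormedSpace.exp (τ • A)‖ :=
          norm_mul_le _ _
      _ ≤ (γ * Real.exp (-lam * τ)) * (γ * Real.exp (-lam * τ)) :=
          mul_le_mul (hnormT τ hτ) (hUAS τ hτ) (norm_nonneg _)
            (by positivity)
      _ = γ * γ * Real.exp (-(2 * lam) * τ) := by
          rw [show -(2 * lam) * τ = -lam * τ + -lam * τ by ring, Real.exp_add]
          ring
  have hgint : IntegrableOn (fun τ : ℝ => γ * γ * Real.exp (-(2 * lam) * τ)) (Ioi 0) :=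
    (exp_neg_integrableOn_Ioi 0 (by positivity)).const_mul _
  -- Part 1: integrability
  have hfint : IntegrableOn f (Ioi 0) := by
    refine Integrable.mono' hgint hcont.aestronglyMeasurable ?_
    filter_upwards [ae_restrict_mem measurableSet_Ioi] with τ hτ
    exact hbound τ (le_of_lt hτ)
  -- Part 2: symmetry
  have hfsymm : ∀ τ : ℝ, (f τ)ᵀ = f τ := by
    intro τ
    rw [hf]
    simp only
    rw [hexpT τ, Matrix.transpose_mul, Matrix.transpose_transpose]
  let T : Matrix (Fin n) (Fin n) ℝ →L[ℝ] Matrix (Fin n) (Fin n) ℝ :=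
    LinearMap.toContinuousLinearMap
      (Matrix.transposeLinearEquiv (Fin n) (Fin n) ℝ ℝ).toLinearMap
  have hT : ∀ M : Matrix (Fin n) (Fin n) ℝ, T M = Mᵀ := fun _ => rfl
  have hsym : (∫ τ in Ioi (0 : ℝ), f τ)ᵀ = ∫ τ in Ioi (0 : ℝ), f τ := by
    calc (∫ τ in Ioi (0 : ℝ), f τ)ᵀ = T (∫ τ in Ioi (0 : ℝ), f τ) := (hT _).symm
      _ = ∫ τ in Ioi (0 : ℝ), T (f τ) := (T.integral_comp_comm hfint).symm
      _ = ∫ τ in Ioi (0 : ℝ), f τ := by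
          refine integral_congr_ae (Filter.Eventually.of_forall fun τ => ?_)
          simp only [hT, hfsymm]
  -- Part 3: positive definiteness
  have hpos : ∀ x : Fin n → ℝ, x ≠ 0 →
      0 < x ⬝ᵥ ((∫ τ in Ioi (0 : ℝ), f τ) *ᵥ x) := by
    intro x hx
    have hvnonneg : ∀ v : Fin n → ℝ, 0 ≤ v ⬝ᵥ v := fun v =>
      Finset.sum_nonneg fun i _ => mul_self_nonneg _
    have hvpos : ∀ v : Fin n → ℝ, v ≠ 0 → 0 < v ⬝ᵥ v := fun v hv =>
      lt_of_le_of_ne (hvnonneg v)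
        (fun h => hv (dotProduct_self_eq_zero.mp h.symm))
    let Qlin : Matrix (Fin n) (Fin n) ℝ →ₗ[ℝ] ℝ :=
      { toFun := fun M => x ⬝ᵥ (M *ᵥ x)
        map_add' := fun M N => by simp [Matrix.add_mulVec, dotProduct_add]
        map_smul' := fun c M => by
          simp [Matrix.smul_mulVec, dotProduct_smul] }
    let Q := Qlin.toContinuousLinearMap
    have hQ : ∀ M : Matrix (Fin n) (Fin n) ℝ, Q M = x ⬝ᵥ (M *ᵥ x) := fun _ => rfl
    have key : ∀ τ : ℝ, Q (f τ) =
        (NormedSpace.exp (τ • A) *ᵥ x) ⬝ᵥ (NormedSpace.exp (τ • A) *ᵥ x) := by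
      intro τ
      rw [hQ, hf]
      simp only
      rw [← Matrix.mulVec_mulVec, Matrix.dotProduct_mulVec, hexpT τ,
        Matrix.vecMul_transpose]
    have hne : ∀ τ : ℝ, NormedSpace.exp (τ • A) *ᵥ x ≠ 0 := by
      intro τ h0
      have hinj := Matrix.mulVec_injective_iff_isUnit.mpr
        (Matrix.isUnit_exp (τ • A))
      exact hx (hinj (h0.trans (Matrix.mulVec_zero _).symm))
    have hQint : IntegrableOn (fun τ => Q (f τ)) (Ioi 0) := Q.integrable_comp hfint
    have hintpos : 0 < ∫ τ in Ioi (0 : ℝ), Q (f τ) := by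
      rw [setIntegral_pos_iff_support_of_nonneg_ae ?_ hQint]
      · have hsupp : Ioi (0 : ℝ) ⊆ Function.support fun τ => Q (f τ) := by
          intro τ _
          rw [Function.mem_support, key τ]
          exact (hvpos _ (hne τ)).ne'
        rw [inter_eq_right.mpr hsupp]
        simp [Real.volume_Ioi]
      · filter_upwards with τ
        rw [Pi.zero_apply, key τ]
        exact hvnonneg _
    calc (0 : ℝ) < ∫ τ in Ioi (0 : ℝ), Q (f τ) := hintpos
      _ = Q (∫ τ in Ioi (0 : ℝ), f τ) := Q.integral_comp_comm hfint
      _ = x ⬝ᵥ ((∫ τ in Ioi (0 : ℝ), f τ) *ᵥ x) := hQ _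
  -- Part 4: Lyapunov equation
  have hderiv : ∀ τ : ℝ, HasDerivAt f (Aᵀ * f τ + f τ * A) τ := by
    intro τ
    have h1 : HasDerivAt (fun t : ℝ => NormedSpace.exp (t • Aᵀ))
        (Aᵀ * NormedSpace.exp (τ • Aᵀ)) τ := hasDerivAt_exp_smul_const' Aᵀ τ
    have h2 : HasDerivAt (fun t : ℝ => NormedSpace.exp (t • A))
        (NormedSpace.exp (τ • A) * A) τ := hasDerivAt_exp_smul_const A τ
    have h3 := h1.mul h2
    refine HasDerivAt.congr_deriv h3 ?_
    rw [hf]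
    simp only
    noncomm_ring
  let L1 : Matrix (Fin n) (Fin n) ℝ →L[ℝ] Matrix (Fin n) (Fin n) ℝ :=
    ContinuousLinearMap.mul ℝ (Matrix (Fin n) (Fin n) ℝ) Aᵀ
  let L2 : Matrix (Fin n) (Fin n) ℝ →L[ℝ] Matrix (Fin n) (Fin n) ℝ :=
    (ContinuousLinearMap.mul ℝ (Matrix (Fin n) (Fin n) ℝ)).flip A
  have hL1 : ∀ M : Matrix (Fin n) (Fin n) ℝ, L1 M = Aᵀ * M := fun _ => rfl
  have hL2 : ∀ M : Matrix (Fin n) (Fin n) ℝ, L2 M = M * A := fun _ => rfl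
  have hint1 : IntegrableOn (fun τ => Aᵀ * f τ) (Ioi 0) := L1.integrable_comp hfint
  have hint2 : IntegrableOn (fun τ => f τ * A) (Ioi 0) := L2.integrable_comp hfint
  have h'int : IntegrableOn (fun τ => Aᵀ * f τ + f τ * A) (Ioi 0) := hint1.add hint2
  have htend : Filter.Tendsto f Filter.atTop (nhds 0) := by
    have hmono : Filter.Tendsto (fun τ : ℝ => (2 * lam) * τ) Filter.atTop Filter.atTop :=
      Filter.Tendsto.const_mul_atTop (by positivity) Filter.tendsto_id
    have h2 : Filter.Tendsto (fun τ : ℝ => Real.exp (-((2 * lam) * τ))) Filter.atTop (nhds 0) :=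
      Real.tendsto_exp_neg_atTop_nhds_zero.comp hmono
    have h3 : Filter.Tendsto (fun τ : ℝ => γ * γ * Real.exp (-(2 * lam) * τ)) Filter.atTop (nhds 0) := by
      simpa [neg_mul, mul_zero] using h2.const_mul (γ * γ)
    refine squeeze_zero_norm' ?_ h3
    filter_upwards [Filter.eventually_ge_atTop (0 : ℝ)] with τ hτ
    exact hbound τ hτ
  have hf0 : f 0 = 1 := by
    rw [hf]
    simp [NormedSpace.exp_zero]
  have hftc : (∫ τ in Ioi (0 : ℝ), (Aᵀ * f τ + f τ * A)) = 0 - f 0 :=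
    integral_Ioi_of_hasDerivAt_of_tendsto hcont.continuousWithinAt
      (fun τ _ => hderiv τ) h'int htend
  refine ⟨hfint, hsym, hpos, ?_⟩
  have hAH : Aᵀ * (∫ τ in Ioi (0 : ℝ), f τ) = ∫ τ in Ioi (0 : ℝ), Aᵀ * f τ := by
    calc Aᵀ * (∫ τ in Ioi (0 : ℝ), f τ) = L1 (∫ τ in Ioi (0 : ℝ), f τ) := (hL1 _).symm
      _ = ∫ τ in Ioi (0 : ℝ), L1 (f τ) := (L1.integral_comp_comm hfint).symm
      _ = ∫ τ in Ioi (0 : ℝ), Aᵀ * f τ := rfl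
  have hHA : (∫ τ in Ioi (0 : ℝ), f τ) * A = ∫ τ in Ioi (0 : ℝ), f τ * A := by
    calc (∫ τ in Ioi (0 : ℝ), f τ) * A = L2 (∫ τ in Ioi (0 : ℝ), f τ) := (hL2 _).symm
      _ = ∫ τ in Ioi (0 : ℝ), L2 (f τ) := (L2.integral_comp_comm hfint).symm
      _ = ∫ τ in Ioi (0 : ℝ), f τ * A := rfl
  rw [hAH, hHA, ← integral_add hint1 hint2, hftc, hf0, zero_sub]
end

section
/- Let A be the constant 2×2 matrix with rows (0, √10) and (−√10, −2). Then every solution x of ẋ = Ax satisfies ‖x(0)‖_I · e^{−2t} ≤ ‖x(t)‖_I ≤ ‖x(0)‖_I for all t ≥ 0. -/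
open scoped Matrix
open Set

/-- for `A = !![0, √10; −√10, −2]`, every solution `x` of `ẋ = Ax` satisfies
`‖x(0)‖ e^{−2t} ≤ ‖x(t)‖ ≤ ‖x(0)‖` for all `t ≥ 0`. -/
theorem stmt15
    (A : Matrix (Fin 2) (Fin 2) ℝ)
    (hA : A = !![0, Real.sqrt 10; -Real.sqrt 10, -2])
    (x : ℝ → Fin 2 → ℝ)
    (hx : ∀ t ∈ Ici (0 : ℝ), HasDerivWithinAt x (A *ᵥ x t) (Ici (0 : ℝ)) t) :
    ∀ t ∈ Ici (0 : ℝ),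
      euclNorm (x 0) * Real.exp (-2 * t) ≤ euclNorm (x t) ∧
      euclNorm (x t) ≤ euclNorm (x 0) := by
  set N : ℝ → ℝ := fun s => x s 0 ^ 2 + x s 1 ^ 2 with hNdef
  have key : ∀ s ∈ Ici (0:ℝ), HasDerivWithinAt N (-4 * x s 1 ^ 2) (Ici 0) s := by
    intro s hs
    have h := hx s hs
    have h0 : HasDerivWithinAt (fun u => x u 0) ((A *ᵥ x s) 0) (Ici 0) s :=
      (hasDerivWithinAt_pi.mp h) 0
    have h1 : HasDerivWithinAt (fun u => x u 1) ((A *ᵥ x s) 1) (Ici 0) s :=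
      (hasDerivWithinAt_pi.mp h) 1
    have e0 : (A *ᵥ x s) 0 = Real.sqrt 10 * x s 1 := by
      simp [hA, Matrix.mulVec, dotProduct, Fin.sum_univ_two]
    have e1 : (A *ᵥ x s) 1 = -Real.sqrt 10 * x s 0 - 2 * x s 1 := by
      simp [hA, Matrix.mulVec, dotProduct, Fin.sum_univ_two]; ring
    rw [e0] at h0; rw [e1] at h1
    have := (h0.pow 2).add (h1.pow 2)
    refine this.congr_deriv ?_
    push_cast
    ring
  have contN : ContinuousOn N (Ici 0) := fun s hs => (key s hs).continuousWithinAt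
  have keyAt : ∀ s ∈ Ioi (0:ℝ), HasDerivAt N (-4 * x s 1 ^ 2) s := fun s hs =>
    (key s (le_of_lt (show (0:ℝ) < s from hs))).hasDerivAt (Ici_mem_nhds hs)
  have anti : AntitoneOn N (Ici 0) := by
    apply antitoneOn_of_deriv_nonpos (convex_Ici 0) contN
    · intro s hs
      rw [interior_Ici] at hs
      exact (keyAt s hs).differentiableAt.differentiableWithinAt
    · intro s hs
      rw [interior_Ici] at hs
      rw [(keyAt s hs).deriv]
      nlinarith [sq_nonneg (x s 1)]
  set M : ℝ → ℝ := fun s => N s * Real.exp (4 * s) with hMdef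
  have keyM : ∀ s ∈ Ioi (0:ℝ), HasDerivAt M (4 * x s 0 ^ 2 * Real.exp (4 * s)) s := by
    intro s hs
    have he : HasDerivAt (fun u : ℝ => Real.exp (4 * u)) (Real.exp (4 * s) * 4) s := by
      simpa using ((hasDerivAt_id s).const_mul 4).exp
    have := (keyAt s hs).mul he
    refine this.congr_deriv ?_
    simp only [hNdef]
    ring
  have contM : ContinuousOn M (Ici 0) :=
    contN.mul (Real.continuous_exp.comp (continuous_const.mul continuous_id)).continuousOn
  have mono : MonotoneOn M (Ici 0) := by
    apply monotoneOn_of_deriv_nonneg (convex_Ici 0) contM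
    · intro s hs
      rw [interior_Ici] at hs
      exact (keyM s hs).differentiableAt.differentiableWithinAt
    · intro s hs
      rw [interior_Ici] at hs
      rw [(keyM s hs).deriv]
      positivity
  have eN : ∀ s, euclNorm (x s) = Real.sqrt (N s) := by
    intro s
    unfold euclNorm
    congr 1
    simp [dotProduct, Fin.sum_univ_two, hNdef]
    ring
  intro t ht
  have hN0 : (0:ℝ) ≤ N 0 := by positivity
  have hNt : (0:ℝ) ≤ N t := by positivity
  constructor
  · -- lower bound
    have hM : M 0 ≤ M t := mono (self_mem_Ici) ht ht
    have hM0 : M 0 = N 0 := by simp [hMdef]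
    rw [hM0] at hM
    rw [eN 0, eN t]
    have hxnn : 0 ≤ Real.sqrt (N 0) * Real.exp (-2 * t) := by positivity
    rw [show Real.sqrt (N 0) * Real.exp (-2 * t) ≤ Real.sqrt (N t) ↔
        (Real.sqrt (N 0) * Real.exp (-2 * t)) ^ 2 ≤ N t from
      (Real.le_sqrt hxnn hNt)]
    have hsq : (Real.sqrt (N 0) * Real.exp (-2 * t)) ^ 2
        = N 0 * Real.exp (-(4 * t)) := by
      rw [mul_pow, Real.sq_sqrt hN0, sq, ← Real.exp_add]
      ring_nf
    rw [hsq]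
    have hpos := Real.exp_pos (4 * t)
    simp only [hMdef] at hM
    rw [Real.exp_neg, mul_inv_le_iff₀' hpos]
    nlinarith [hM]
  · -- upper bound
    rw [eN 0, eN t]
    exact Real.sqrt_le_sqrt (anti (self_mem_Ici) ht ht)
end
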